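/- Let 0 < α < 1. Define ψ₁(α,y) = y(1-y)^(α-1) / (1-(1-y)^α) for y ∈ (0,1). Then ψ₁(α,·) is strictly increasing in y on the interval (0,1); that is, for all 0 < y₁ < y₂ < 1, ψ₁(α,y₁) < ψ₁(α,y₂). -/

import Mathlib

open Real

/-- Lemma 2(i): for `0 < α < 1`, the function
`ψ₁(α,y) = y (1-y)^(α-1) / (1 - (1-y)^α)` is strictly increasing in `y` on `(0,1)`. -/
theorem psi1_strictly_increasing (α : ℝ) (hα0 : 0 < α) (hα1 : α < 1) :
    ∀ y₁ y₂ : ℝ, 0 < y₁ → y₁ < y₂ → y₂ < 1 →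
      y₁ * (1 - y₁) ^ (α - 1) / (1 - (1 - y₁) ^ α) <
        y₂ * (1 - y₂) ^ (α - 1) / (1 - (1 - y₂) ^ α) := by
  intro y₁ y₂ hy₁ h12 hy₂
  set p : ℝ := 1 - α with hp
  have hp0 : 0 < p := by linarith
  have hp1 : p < 1 := by linarith
  have h1 : (0:ℝ) < 1 - y₁ := by linarith
  have h2 : (0:ℝ) < 1 - y₂ := by linarith
  -- rewrite ψ(y) = y / ((1-y)^p - (1-y))
  have rw_psi : ∀ y : ℝ, 0 < y → y < 1 →
      y * (1 - y) ^ (α - 1) / (1 - (1 - y) ^ α) = y / ((1 - y) ^ p - (1 - y)) := by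
    intro y hy hy1
    have h : (0:ℝ) < 1 - y := by linarith
    have hmul : (1 - y) ^ p * (1 - y) ^ α = 1 - y := by
      rw [← Real.rpow_add h]; simp [hp]
    have hne : (1 - y) ^ p ≠ 0 := (Real.rpow_pos_of_pos h p).ne'
    rw [div_eq_div_iff]
    · have : (1 - y) ^ (α - 1) = ((1 - y) ^ p)⁻¹ := by
        rw [← Real.rpow_neg h.le, show -p = α - 1 by rw [hp]; ring]
      rw [this]
      field_simp
      ring_nf
      nlinarith [hmul]
    · have : (1 - y) ^ α < 1 := Real.rpow_lt_one h.le (by linarith) hα0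
      linarith
    · have hlt : 1 - y < (1 - y) ^ p := by
        nth_rewrite 1 [show (1:ℝ) - y = (1 - y) ^ (1:ℝ) by simp]
        exact Real.rpow_lt_rpow_of_exponent_gt h (by linarith) hp1
      linarith
  rw [rw_psi y₁ hy₁ (by linarith), rw_psi y₂ (by linarith) hy₂]
  have hg : ∀ y : ℝ, y < 1 → 0 < y → 0 < (1 - y) ^ p - (1 - y) := by
    intro y hy1 hy
    have h : (0:ℝ) < 1 - y := by linarith
    have hlt : 1 - y < (1 - y) ^ p := by
      nth_rewrite 1 [show (1:ℝ) - y = (1 - y) ^ (1:ℝ) by simp]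
      exact Real.rpow_lt_rpow_of_exponent_gt h (by linarith) hp1
    linarith
  rw [div_lt_div_iff₀ (hg y₁ (by linarith) hy₁) (hg y₂ hy₂ (by linarith))]
  -- key: y₁ * g y₂ < y₂ * g y₁, via strict concavity of x ↦ x^p
  set a : ℝ := y₁ / y₂ with ha
  have hy₂0 : (0:ℝ) < y₂ := by linarith
  have ha0 : 0 < a := div_pos hy₁ hy₂0
  have ha1 : a < 1 := (div_lt_one hy₂0).2 h12
  have hb0 : 0 < 1 - a := by linarith
  have hcomb : a * (1 - y₂) + (1 - a) * 1 = 1 - y₁ := by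
    field_simp [ha]
    rw [ha, mul_sub, mul_one, div_mul_cancel₀ _ hy₂0.ne']
    ring
  have hconc := (Real.strictConcaveOn_rpow hp0 hp1).2
    (Set.mem_Ici.2 h2.le) (Set.mem_Ici.2 (by norm_num : (0:ℝ) ≤ 1))
    (by intro h; nlinarith : (1 - y₂) ≠ 1) ha0 hb0 (by ring)
  simp only [smul_eq_mul, Real.one_rpow] at hconc
  rw [hcomb] at hconc
  -- hconc : a * (1-y₂)^p + (1-a) < (1-y₁)^p
  have hay : a * y₂ = y₁ := by rw [ha, div_mul_cancel₀ _ hy₂0.ne']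
  nlinarith [hconc, Real.rpow_pos_of_pos h2 p]
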